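/- Let 0 < |n| < 1 and let (α,p) be in the interior of K_{|n|}. For every η > 0 there exists ν = ν(n,α,p,η) > 0 such that for all v > u > 0 with 1 + η ≤ v/u < 1 + η^{-1}, the matrix inequality Q_{α,p}(v,u) ≥ v^γ ν I₂ holds, where I₂ is the 2×2 identity matrix. -/

import Mathlib

open MeasureTheory Set Filter Topology

noncomputable section

/-- The critical exponent `P₋(α) = 1 + (2/n²)(1-α)(α - √(α²-n²))`. -/
def Pminus (n a : ℝ) : ℝ := 1 + (2 / n ^ 2) * (1 - a) * (a - Real.sqrt (a ^ 2 - n ^ 2))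

/-- The critical exponent `P₊(α) = 1 + (2/n²)(1-α)(α + √(α²-n²))`. -/
def Pplus (n a : ℝ) : ℝ := 1 + (2 / n ^ 2) * (1 - a) * (a + Real.sqrt (a ^ 2 - n ^ 2))

/-- The admissible set `K_{|n|}` of pairs `(α,p)`. -/
def Kset (n : ℝ) : Set (ℝ × ℝ) :=
  if n = 0 then {q | 0 < q.1 ∧ q.1 ≤ 1 ∧ 1 ≤ q.1 * q.2}
  else {q | |n| ≤ q.1 ∧ q.1 ≤ 1 ∧ Pminus n q.1 ≤ q.2 ∧ q.2 ≤ Pplus n q.1}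

/-- The symmetric matrix `Q_{α,p}(v,u)`, with `γ = n/α`, `Γ = (1-α)/(α(p-1))`,
and the convention `Q_{1,1} = 0`. -/
def Qmat (n a p v u : ℝ) : Matrix (Fin 2) (Fin 2) ℝ :=
  if a = 1 ∧ p = 1 then 0 else
  (p - 1) • !![v ^ (n / a) * (1 + ((1 - a) / (a * (p - 1))) * (u / v - 1)),
      -(v ^ (n / a) + u ^ (n / a)) / 2;
      -(v ^ (n / a) + u ^ (n / a)) / 2,
      u ^ (n / a) * (1 + ((1 - a) / (a * (p - 1))) * (v / u - 1))]

/-- The symmetric matrix `M_{α,p}`, with `γ = n/α`, `Γ = (1-α)/(α(p-1))`,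
and the convention `M_{1,1} = 0`. -/
def Mmat (n a p : ℝ) : Matrix (Fin 2) (Fin 2) ℝ :=
  if a = 1 ∧ p = 1 then 0 else
  (p - 1) • !![(1 : ℝ), -((1 - a) / (a * (p - 1))) + (n / a) / 2;
      -((1 - a) / (a * (p - 1))) + (n / a) / 2,
      ((1 - a) / (a * (p - 1))) * (1 - n / a)]

set_option maxHeartbeats 1000000

lemma sinh_convexOn' : ConvexOn ℝ (Set.Ici (0:ℝ)) Real.sinh := by
  apply convexOn_of_deriv2_nonneg (convex_Ici 0) Real.continuous_sinh.continuousOn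
    Real.differentiable_sinh.differentiableOn
  · rw [Real.deriv_sinh]
    exact Real.differentiable_cosh.differentiableOn
  · intro x hx
    have h2 : deriv^[2] Real.sinh = Real.sinh := by
      ext y
      simp [Function.iterate_succ_apply, Real.deriv_sinh, Real.deriv_cosh]
    rw [h2]
    rw [interior_Ici] at hx
    exact (Real.sinh_nonneg_iff).2 (le_of_lt hx)

lemma exp_sub_exp_le' {c x : ℝ} (hc0 : 0 ≤ c) (hc1 : c ≤ 1) (hx : 0 ≤ x) :
    Real.exp (c*x) - Real.exp (-(c*x)) ≤ c * (Real.exp x - Real.exp (-x)) := by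
  have h := sinh_convexOn'.2 (Set.mem_Ici.2 hx) (Set.mem_Ici.2 (le_refl (0:ℝ))) hc0
    (by linarith : (0:ℝ) ≤ 1 - c) (by ring)
  simp only [smul_eq_mul, mul_zero, add_zero, Real.sinh_zero] at h
  rw [Real.sinh_eq, Real.sinh_eq] at h
  linarith

lemma key_rpow' {γ s : ℝ} (hγ : |γ| ≤ 1) (hs0 : 0 < s) (hs1 : s ≤ 1) :
    (1 - s ^ γ) ^ 2 ≤ γ ^ 2 * (1 - s) ^ 2 * (s ^ γ / s) := by
  set t : ℝ := -Real.log s / 2 with htdef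
  have hlog : Real.log s = -(2*t) := by rw [htdef]; ring
  have ht0 : 0 ≤ t := by
    have := Real.log_nonpos hs0.le hs1
    rw [htdef]; linarith
  set A : ℝ := Real.exp (γ*t) with hA
  set B : ℝ := Real.exp (-(γ*t)) with hB
  set C : ℝ := Real.exp t with hC
  set D : ℝ := Real.exp (-t) with hD
  have hAB : A * B = 1 := by rw [hA, hB, ← Real.exp_add]; simp
  have hCD : C * D = 1 := by rw [hC, hD, ← Real.exp_add]; simp
  have hD0 : 0 < D := Real.exp_pos _
  have hB0 : 0 < B := Real.exp_pos _
  have hs : s = D^2 := by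
    rw [hD, ← Real.exp_log hs0, hlog, sq, ← Real.exp_add]; ring_nf
  have hsγ : s ^ γ = B^2 := by
    rw [Real.rpow_def_of_pos hs0, hlog, hB, sq, ← Real.exp_add]; ring_nf
  set c : ℝ := |γ| with hc
  have hc0 : 0 ≤ c := abs_nonneg γ
  have hcore : (A - B)^2 ≤ γ^2 * (C - D)^2 := by
    have hkey : Real.exp (c*t) - Real.exp (-(c*t)) ≤ c * (C - D) :=
      exp_sub_exp_le' hc0 hγ ht0
    have hpos : 0 ≤ Real.exp (c*t) - Real.exp (-(c*t)) := by
      have h' : -(c*t) ≤ c*t := by nlinarith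
      linarith [Real.exp_le_exp.2 h']
    have hsq : (Real.exp (c*t) - Real.exp (-(c*t)))^2 ≤ (c * (C - D))^2 := by
      nlinarith [hkey, hpos]
    have habs : (A - B)^2 = (Real.exp (c*t) - Real.exp (-(c*t)))^2 := by
      rcases abs_cases γ with ⟨h1, _⟩ | ⟨h1, _⟩
      · rw [hc, h1]
      · rw [hc, h1, hA, hB]
        simp only [neg_mul, neg_neg]
        ring
    calc (A - B)^2 = (Real.exp (c*t) - Real.exp (-(c*t)))^2 := habs
    _ ≤ (c * (C - D))^2 := hsq
    _ = γ^2 * (C - D)^2 := by rw [mul_pow, hc, sq_abs]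
  have h1 : (1 : ℝ) - B^2 = B*(A - B) := by rw [← hAB]; ring
  have h2 : (1 : ℝ) - D^2 = D*(C - D) := by rw [← hCD]; ring
  rw [hsγ, hs, h1, h2]
  have e : γ^2*(D*(C-D))^2*((B^2)/(D^2)) = γ^2*(C-D)^2*B^2 := by
    field_simp
  rw [e]
  nlinarith [mul_le_mul_of_nonneg_left hcore (sq_nonneg B)]

lemma posSemidef_two' {a b d : ℝ} (ha : 0 < a) (hdet : b^2 ≤ a*d) :
    (!![a, b; b, d] : Matrix (Fin 2) (Fin 2) ℝ).PosSemidef := by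
  rw [Matrix.posSemidef_iff_dotProduct_mulVec]
  constructor
  · ext i j
    fin_cases i <;> fin_cases j <;>
      simp [Matrix.conjTranspose_apply]
  · intro z
    simp only [dotProduct, Matrix.mulVec, Fin.sum_univ_two, Pi.star_apply, star_trivial,
      Matrix.cons_val', Matrix.cons_val_zero, Matrix.cons_val_one, Matrix.head_cons,
      Matrix.empty_val', Matrix.cons_val_fin_one, Matrix.head_fin_const, Matrix.of_apply]
    nlinarith [sq_nonneg (a * z 0 + b * z 1), mul_nonneg (sub_nonneg.2 hdet) (sq_nonneg (z 1)),
      sq_nonneg (z 1), ha.le]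

/-- Lemma: positive definiteness of `Q_{α,p}` on a relative annulus.
For `0 < |n| < 1` and `(α,p)` in the interior of `K_{|n|}`, for every `η > 0` there is
`ν = ν(n,α,p,η) > 0` such that `Q_{α,p}(v,u) ≥ v^γ ν I₂` whenever `v > u > 0` and
`1 + η ≤ v/u < 1 + η⁻¹`. -/
theorem Qmat_posdef_on_annulus (n α p : ℝ) (hn0 : 0 < |n|) (hn1 : |n| < 1)
    (hK : (α, p) ∈ interior (Kset n)) :
    ∀ η : ℝ, 0 < η → ∃ ν : ℝ, 0 < ν ∧ ∀ v u : ℝ, 0 < u → u < v →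
      1 + η ≤ v / u → v / u < 1 + η⁻¹ →
      (Qmat n α p v u - (v ^ (n / α) * ν) • (1 : Matrix (Fin 2) (Fin 2) ℝ)).PosSemidef := by
  -- extract open conditions from interior membership
  have hn : n ≠ 0 := fun h => by simp [h] at hn0
  have hKo := hK
  rw [mem_interior_iff_mem_nhds, Metric.mem_nhds_iff] at hKo
  obtain ⟨ε, hε, hsub⟩ := hKo
  have hmem : ∀ a' p' : ℝ, |a' - α| < ε → |p' - p| < ε →
      (|n| ≤ a' ∧ a' ≤ 1 ∧ Pminus n a' ≤ p' ∧ p' ≤ Pplus n a') := by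
    intro a' p' h1 h2
    have : ((a', p') : ℝ × ℝ) ∈ Kset n := by
      apply hsub
      rw [Metric.mem_ball, Prod.dist_eq]
      simp only [Real.dist_eq]
      exact max_lt h1 h2
    rw [Kset, if_neg hn] at this
    exact this
  have habs : |(ε/2 : ℝ)| < ε := by rw [abs_of_pos (by linarith)]; linarith
  have h0' : |(0 : ℝ)| < ε := by simpa using hε
  have hm1 := hmem (α + ε/2) p (by simpa using habs) (by simpa using h0')
  have hm2 := hmem (α - ε/2) p (by rw [show α - ε/2 - α = -(ε/2) by ring, abs_neg]; exact habs)
    (by simpa using h0')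
  have hm3 := hmem α (p + ε/2) (by simpa using h0') (by simpa using habs)
  have hm4 := hmem α (p - ε/2) (by simpa using h0')
    (by rw [show p - ε/2 - p = -(ε/2) by ring, abs_neg]; exact habs)
  have hαn : |n| < α := by linarith [hm2.1]
  have hα1 : α < 1 := by linarith [hm1.2.1]
  have hpm : Pminus n α < p := by linarith [hm4.2.2.1]
  have hpp : p < Pplus n α := by linarith [hm3.2.2.2]
  -- basic numeric facts
  have hα0 : 0 < α := lt_trans hn0 hαn
  have hn2 : 0 < n^2 := by positivity
  have hd : n^2 < α^2 := by
    have h9 : |n| * |n| < α*α := mul_lt_mul'' hαn hαn (abs_nonneg n) (abs_nonneg n)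
    rw [abs_mul_abs_self] at h9
    calc n^2 = n*n := sq n
    _ < α*α := h9
    _ = α^2 := (sq α).symm
  set S : ℝ := Real.sqrt (α^2 - n^2) with hSdef
  have hS2 : S^2 = α^2 - n^2 := Real.sq_sqrt (by linarith)
  have hS0 : 0 ≤ S := Real.sqrt_nonneg _
  have hSα : S < α := by
    by_contra hcon
    push_neg at hcon
    have h9 : α*α ≤ S*S := mul_le_mul hcon hcon hα0.le hS0
    have h9' : α^2 ≤ S^2 := by rw [sq, sq]; exact h9
    linarith [hS2, hn2]
  have hp1 : 1 < p := by
    have : 0 < (2/n^2) * (1-α) * (α - S) := by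
      apply mul_pos (mul_pos (by positivity) (by linarith)) (by linarith)
    rw [Pminus] at hpm
    linarith
  have hw0 : 0 < p - 1 := by linarith
  -- the quadratic inequality
  have hquad : n^2*(p-1)^2 + 4*(1-α)^2 < 4*(1-α)*α*(p-1) := by
    rw [Pminus] at hpm
    rw [Pplus] at hpp
    have e1 : 0 < (p-1)*n^2 - 2*(1-α)*(α - S) := by
      have h := hpm
      have : (2/n^2) * (1-α) * (α - S) < p - 1 := by linarith
      calc (0:ℝ) < ((p-1) - (2/n^2) * (1-α) * (α - S)) * n^2 := by
            apply mul_pos (by linarith) hn2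
      _ = (p-1)*n^2 - 2*(1-α)*(α - S) := by field_simp; try ring
    have e2 : 0 < 2*(1-α)*(α + S) - (p-1)*n^2 := by
      have : p - 1 < (2/n^2) * (1-α) * (α + S) := by linarith
      calc (0:ℝ) < ((2/n^2) * (1-α) * (α + S) - (p-1)) * n^2 := by
            apply mul_pos (by linarith) hn2
      _ = 2*(1-α)*(α + S) - (p-1)*n^2 := by field_simp; try ring
    have hPe : ((p-1)*n^2 - 2*(1-α)*(α-S)) * (2*(1-α)*(α+S) - (p-1)*n^2) =
        (4*(1-α)*α*(p-1) - n^2*(p-1)^2 - 4*(1-α)^2) * n^2 := by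
      linear_combination (4*(1-α)^2) * hS2
    have e3 : 0 < (4*(1-α)*α*(p-1) - n^2*(p-1)^2 - 4*(1-α)^2) * n^2 := by
      rw [← hPe]; exact mul_pos e1 e2
    have hX : 0 < 4*(1-α)*α*(p-1) - n^2*(p-1)^2 - 4*(1-α)^2 := by
      by_contra h
      push_neg at h
      have h2' : (4*(1-α)*α*(p-1) - n^2*(p-1)^2 - 4*(1-α)^2) * n^2 ≤ 0 :=
        mul_nonpos_of_nonpos_of_nonneg h hn2.le
      linarith
    linarith
  set Γ : ℝ := (1 - α) / (α * (p - 1)) with hΓdef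
  have hΓ0 : 0 < Γ := div_pos (by linarith) (by positivity)
  set κ : ℝ := Γ*(1-Γ) - (n/α)^2/4 with hκdef
  have hκ0 : 0 < κ := by
    have hid : κ = (4*(1-α)*α*(p-1) - 4*(1-α)^2 - n^2*(p-1)^2)/(4*α^2*(p-1)^2) := by
      rw [hκdef, hΓdef]
      field_simp
    rw [hid]
    apply div_pos (by linarith) (by positivity)
  have hαw : 1 - α < α*(p-1) := by
    by_contra hcon
    push_neg at hcon
    have h2' := mul_le_mul_of_nonneg_left hcon (by linarith : (0:ℝ) ≤ 4*(1-α))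
    linarith [hquad, h2', mul_pos hn2 (mul_pos hw0 hw0)]
  have hΓ1 : Γ < 1 := by
    rw [hΓdef, div_lt_one (by positivity)]
    linarith
  have hγ1 : |n/α| < 1 := by
    rw [abs_div, abs_of_pos hα0]
    rw [div_lt_one hα0]
    exact hαn
  obtain ⟨hγlo, hγhi⟩ := abs_lt.1 hγ1
  have hγle : -1 ≤ n/α ∧ n/α ≤ 1 := ⟨by linarith, by linarith⟩
  have hnot : ¬(α = 1 ∧ p = 1) := fun h => absurd h.1 (ne_of_lt hα1)
  -- main part
  intro η hη
  set sL : ℝ := η/(1+η) with hsLdef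
  have hsL0 : 0 < sL := div_pos hη (by linarith)
  have hsL1 : sL < 1 := by rw [hsLdef, div_lt_one (by linarith)]; linarith
  refine ⟨(p-1)/2 * min (1-Γ) (min sL (κ*sL^4/3)), ?_, ?_⟩
  · apply mul_pos (by linarith)
    apply lt_min (by linarith) (lt_min hsL0 (by positivity))
  set ν : ℝ := (p-1)/2 * min (1-Γ) (min sL (κ*sL^4/3)) with hνdef
  have hν0 : 0 < ν := by
    apply mul_pos (by linarith)
    apply lt_min (by linarith) (lt_min hsL0 (by positivity))
  have hν1 : ν ≤ (p-1)/2 * (1-Γ) :=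
    mul_le_mul_of_nonneg_left (min_le_left _ _) (by linarith)
  have hν2 : ν ≤ (p-1)/2 * sL :=
    mul_le_mul_of_nonneg_left (le_trans (min_le_right _ _) (min_le_left _ _)) (by linarith)
  have hν3 : ν ≤ (p-1)/2 * (κ*sL^4/3) :=
    mul_le_mul_of_nonneg_left (le_trans (min_le_right _ _) (min_le_right _ _)) (by linarith)
  intro v u hu huv h1 h2
  have hv : 0 < v := lt_trans hu huv
  set s : ℝ := u/v with hsdef
  have hs0 : 0 < s := div_pos hu hv
  have hs1 : s < 1 := by rw [hsdef, div_lt_one hv]; exact huv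
  have hsub1 : s * (1+η) ≤ 1 := by
    rw [hsdef, div_mul_eq_mul_div, div_le_one hv]
    have := (le_div_iff₀ hu).1 h1
    linarith
  have hslb : sL < s := by
    have hv2 : v < (1+η⁻¹) * u := (div_lt_iff₀ hu).1 h2
    have he : η * (1+η⁻¹) = 1 + η := by
      rw [mul_add, mul_one, mul_inv_cancel₀ hη.ne']
      ring
    have h3 : v*η < u*(1+η) := by
      calc v*η < ((1+η⁻¹) * u)*η := mul_lt_mul_of_pos_right hv2 hη
      _ = u*(η*(1+η⁻¹)) := by ring
      _ = u*(1+η) := by rw [he]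
    rw [hsLdef, hsdef, div_lt_div_iff₀ (by linarith) hv]
    linarith [h3]
  have h1s : sL ≤ 1 - s := by
    have hid : sL * (1+η) = η := by rw [hsLdef]; field_simp
    by_contra hcon
    push_neg at hcon
    have h3 := mul_lt_mul_of_pos_right hcon (by linarith : (0:ℝ) < 1+η)
    rw [hid] at h3
    linarith [hsub1]
  set x : ℝ := s ^ (n/α) with hxdef
  have hx0 : 0 < x := Real.rpow_pos_of_pos hs0 _
  have hxs : s ≤ x := by
    have := Real.rpow_le_rpow_of_exponent_ge hs0 hs1.le hγle.2
    rwa [Real.rpow_one] at this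
  have hxu : x * s ≤ 1 := by
    have e : x * s = s ^ ((n/α) + 1) := by
      rw [Real.rpow_add hs0, Real.rpow_one]
    rw [e]
    exact Real.rpow_le_one hs0.le hs1.le (by linarith [hγle.1])
  have hxs1 : 1 ≤ x/s := (one_le_div hs0).2 hxs
  have hkey : (1 - x)^2 ≤ (n/α)^2 * (1-s)^2 * (x/s) := key_rpow' hγ1.le hs0 hs1.le
  set f0 : ℝ := 1 - Γ*(1-s) with hf0def
  set g0 : ℝ := x + Γ*(1-s)*(x/s) with hg0def
  set F : ℝ := (p-1)*f0 - ν with hFdef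
  set G : ℝ := (p-1)*g0 - ν with hGdef
  set Bq : ℝ := (p-1)*(1+x)/2 with hBqdef
  have hvu' : v/u = 1/s := by rw [hsdef, one_div_div]
  have huv2 : u/v = s := hsdef.symm
  have huvγ : u ^ (n/α) = v^(n/α) * x := by
    rw [hxdef, hsdef, ← Real.mul_rpow hv.le (div_nonneg hu.le hv.le)]
    congr 1
    field_simp
  clear_value S Γ κ sL ν s x f0 g0 F G Bq
  have hf0lb : 1 - Γ ≤ f0 := by
    rw [hf0def]; linarith [mul_pos hΓ0 hs0]
  have hF : 0 < F := by
    rw [hFdef]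
    linarith [mul_le_mul_of_nonneg_left hf0lb hw0.le, hν1,
      mul_pos hw0 (show (0:ℝ) < 1-Γ by linarith)]
  have hg0lb : sL ≤ g0 := by
    rw [hg0def]
    have : 0 ≤ Γ*(1-s)*(x/s) :=
      mul_nonneg (mul_nonneg hΓ0.le (by linarith)) (div_nonneg hx0.le hs0.le)
    linarith [hxs, hslb]
  have hG : 0 < G := by
    rw [hGdef]
    linarith [mul_le_mul_of_nonneg_left hg0lb hw0.le, hν2, mul_pos hw0 hsL0]
  -- determinant bound
  have hid : f0 * g0 - (1+x)^2/4 = Γ*(1-Γ)*(1-s)^2*(x/s) - (1-x)^2/4 := by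
    rw [hf0def, hg0def]
    field_simp
    ring
  have hD : κ*sL^2 ≤ f0 * g0 - (1+x)^2/4 := by
    rw [hid]
    have e1 : κ * sL^2 ≤ κ * (1-s)^2 :=
      mul_le_mul_of_nonneg_left (pow_le_pow_left₀ hsL0.le h1s 2) hκ0.le
    have e2 : κ * (1-s)^2 ≤ κ*(1-s)^2*(x/s) := by
      have h9 : 0 ≤ κ * (1-s)^2 := mul_nonneg hκ0.le (sq_nonneg _)
      calc κ * (1-s)^2 = κ*(1-s)^2*1 := by ring
      _ ≤ κ*(1-s)^2*(x/s) := mul_le_mul_of_nonneg_left hxs1 h9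
    have e3 : κ*((1-s)^2*(x/s)) =
        Γ*(1-Γ)*(1-s)^2*(x/s) - (n/α)^2/4*((1-s)^2*(x/s)) := by
      rw [hκdef]; ring
    linarith [hkey, e1, e2, e3]
  have hxsq : x/s ≤ 1/sL^2 := by
    rw [div_le_div_iff₀ hs0 (pow_pos hsL0 2)]
    have q1 : x*sL^2 ≤ x*s^2 :=
      mul_le_mul_of_nonneg_left (pow_le_pow_left₀ hsL0.le hslb.le 2) hx0.le
    have q2 := mul_le_mul_of_nonneg_right hxu hs0.le
    linarith [q1, q2]
  have hfg : f0 + g0 ≤ 3/sL^2 := by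
    have hf0ub : f0 ≤ 1 := by
      rw [hf0def]
      linarith [mul_nonneg hΓ0.le (by linarith : (0:ℝ) ≤ 1-s)]
    have hxle : x ≤ x/s := by
      rw [le_div_iff₀ hs0]
      exact mul_le_of_le_one_right hx0.le hs1.le
    have hg0ub : g0 ≤ 2*(x/s) := by
      rw [hg0def]
      have hΓs : Γ*(1-s) ≤ 1 := by
        have := mul_le_mul hΓ1.le (show (1:ℝ)-s ≤ 1 by linarith)
          (by linarith) (by linarith)
        linarith
      have := mul_le_mul_of_nonneg_right hΓs (by positivity : (0:ℝ) ≤ x/s)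
      linarith [hxle]
    have h1le : (1:ℝ) ≤ 1/sL^2 := by
      rw [le_div_iff₀ (pow_pos hsL0 2)]
      linarith [mul_lt_mul'' hsL1 hsL1 hsL0.le hsL0.le]
    have := hxsq
    calc f0 + g0 ≤ 1 + 2*(x/s) := by linarith
    _ ≤ 1/sL^2 + 2*(1/sL^2) := by linarith
    _ = 3/sL^2 := by ring
  have hdet : Bq^2 ≤ F*G := by
    have hDer : F*G - Bq^2 = (p-1)^2 * (f0*g0 - (1+x)^2/4) - ν*(p-1)*(f0+g0) + ν^2 := by
      rw [hFdef, hGdef, hBqdef]; ring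
    have t1 : (p-1)^2 * (κ*sL^2) ≤ (p-1)^2 * (f0*g0 - (1+x)^2/4) :=
      mul_le_mul_of_nonneg_left hD (by positivity)
    have t2 : ν*(p-1)*(f0+g0) ≤ ν*(p-1)*(3/sL^2) :=
      mul_le_mul_of_nonneg_left hfg (mul_nonneg hν0.le hw0.le)
    have t3 : ν*(p-1)*(3/sL^2) ≤ (p-1)^2*(κ*sL^2)/2 := by
      have h4 : ν*(p-1)*(3/sL^2) ≤ ((p-1)/2 * (κ*sL^4/3))*(p-1)*(3/sL^2) := by
        apply mul_le_mul_of_nonneg_right (mul_le_mul_of_nonneg_right hν3 hw0.le)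
          (div_nonneg (by norm_num) (sq_nonneg sL))
      have h5 : ((p-1)/2 * (κ*sL^4/3))*(p-1)*(3/sL^2) = (p-1)^2*(κ*sL^2)/2 := by
        field_simp
      linarith [h4, h5.le]
    linarith [hDer, t1, t2, t3, sq_nonneg ν,
      mul_nonneg (sq_nonneg (p-1)) (mul_nonneg hκ0.le (sq_nonneg sL))]
  -- matrix computation
  have hQeq : Qmat n α p v u - (v ^ (n/α) * ν) • (1 : Matrix (Fin 2) (Fin 2) ℝ) =
      !![v^(n/α)*F, -(v^(n/α)*Bq); -(v^(n/α)*Bq), v^(n/α)*G] := by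
    rw [Qmat, if_neg hnot]
    ext i j
    fin_cases i <;> fin_cases j <;>
      all_goals (
        try simp only [Matrix.sub_apply, Matrix.smul_apply, Matrix.one_apply, Matrix.cons_val',
          Matrix.cons_val_zero, Matrix.cons_val_one, Matrix.head_cons, Matrix.empty_val',
          Matrix.cons_val_fin_one, Matrix.head_fin_const, Matrix.of_apply, smul_eq_mul]
        try norm_num
        try simp only [huvγ, huv2, hvu', ← hΓdef, hFdef, hGdef, hBqdef, hf0def, hg0def]
        try field_simp
        try ring)
  rw [hQeq]
  apply posSemidef_two' (mul_pos (Real.rpow_pos_of_pos hv _) hF)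
  have hvγ : (0:ℝ) < v^(n/α) := Real.rpow_pos_of_pos hv _
  calc (-(v^(n/α)*Bq))^2 = (v^(n/α))^2 * Bq^2 := by ring
  _ ≤ (v^(n/α))^2 * (F*G) := mul_le_mul_of_nonneg_left hdet (by positivity)
  _ = (v^(n/α)*F) * (v^(n/α)*G) := by ring
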